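/- The map E ↦ E^⋆ := ⋂{J ∈ 𝒮 : E ⊆ J}, defined on nonzero fractional ideals of D, is a star operation on D; that is, for every nonzero z ∈ K and all nonzero fractional ideals E, F of D: (zD)^⋆ = zD, (zE)^⋆ = z(E^⋆), E ⊆ F implies E^⋆ ⊆ F^⋆, E ⊆ E^⋆, and (E^⋆)^⋆ = E^⋆. -/

import Mathlib

open MvPolynomial FractionalIdeal

noncomputable section

variable (k : Type*) [Field k]

/-- The ideal `N = (X_1, X_2, ...)` of `R = k[X_1, X_2, ...]` generated by all the
indeterminates. -/
def bigN : Ideal (MvPolynomial ℕ k) := Ideal.span (Set.range MvPolynomial.X)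

theorem bigN_eq_ker : bigN k = RingHom.ker (constantCoeff (σ := ℕ) (R := k)) := by
  ext p
  rw [bigN, ← Set.image_univ, mem_ideal_span_X_image, RingHom.mem_ker]
  constructor
  · intro h
    rw [constantCoeff_eq]
    by_contra hc
    obtain ⟨i, _, hi⟩ := h 0 (mem_support_iff.mpr hc)
    simp at hi
  · intro h m hm
    rw [constantCoeff_eq] at h
    have hm0 : m ≠ 0 := by rintro rfl; exact mem_support_iff.mp hm h
    obtain ⟨i, hi⟩ := Finsupp.ne_iff.mp hm0
    exact ⟨i, trivial, by simpa using hi⟩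

instance : (bigN k).IsMaximal := by
  rw [bigN_eq_ker]
  exact RingHom.ker_isMaximal_of_surjective _ (fun a => ⟨C a, by simp⟩)

/-- `D`, the localization of `k[X_1, X_2, ...]` at the maximal ideal `N`. -/
abbrev bigD := Localization.AtPrime (bigN k)

/-- `K`, the fraction field of `D`. -/
abbrev bigK := FractionRing (bigD k)

/-- `M`, the maximal ideal of the local domain `D`. -/
def bigM : Ideal (bigD k) := IsLocalRing.maximalIdeal (bigD k)

open Pointwise

attribute [-instance] instAlgebraAtPrimeFractionRing

/-- The maximal ideal `M` of `D`, viewed as a fractional ideal of `D`. -/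
def bigMF : FractionalIdeal (nonZeroDivisors (bigD k)) (bigK k) :=
  ((bigM k : Ideal (bigD k)) : FractionalIdeal (nonZeroDivisors (bigD k)) (bigK k))

/-- The `b`-operation: `E^b = ⋂ EV`, the intersection over all valuation overrings `V` of `D`
of the `V`-submodule of `K` generated by `E` (viewed as a `D`-submodule of `K`). -/
def bOp (E : Submodule (bigD k) (bigK k)) : Submodule (bigD k) (bigK k) :=
  sInf {J | ∃ V : ValuationSubring (bigK k),
    (∀ d : bigD k, algebraMap (bigD k) (bigK k) d ∈ V) ∧
    J = Submodule.span (bigD k) ((E : Set (bigK k)) * (V : Set (bigK k)))}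

/-- The set `𝒮` of all fractional ideals of `D` of the form `xF^b` (with `x ∈ K` nonzero and
`F` a finitely generated nonzero fractional ideal of `D`) or `yM` (with `y ∈ K` nonzero),
viewed as `D`-submodules of `K`. -/
def Sset : Set (Submodule (bigD k) (bigK k)) :=
  {J | (∃ x : bigK k, x ≠ 0 ∧
          ∃ F : FractionalIdeal (nonZeroDivisors (bigD k)) (bigK k), F ≠ 0 ∧
            (F : Submodule (bigD k) (bigK k)).FG ∧
            J = Submodule.span (bigD k) {x} * bOp k (F : Submodule (bigD k) (bigK k))) ∨
       (∃ y : bigK k, y ≠ 0 ∧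
          J = Submodule.span (bigD k) {y} * (bigMF k : Submodule (bigD k) (bigK k)))}

/-- The operation `E^⋆ := ⋂ {J ∈ 𝒮 : E ⊆ J}`. -/
def starS (E : Submodule (bigD k) (bigK k)) : Submodule (bigD k) (bigK k) :=
  sInf {J | J ∈ Sset k ∧ E ≤ J}


set_option maxHeartbeats 1000000
set_option synthInstance.maxHeartbeats 400000

section AuxValuation

variable {K' : Type*} [Field K']

lemma aux_integral_of_aeval_inv (A : Subring K') {x : K'} (hx : x ≠ 0)
    (p : Polynomial A) (hp : Polynomial.aeval x⁻¹ p = x) : IsIntegral A x := by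
  classical
  set n := p.natDegree with hn
  refine ⟨Polynomial.X ^ (n + 1) - ∑ i ∈ Finset.range (n + 1),
      Polynomial.C (p.coeff i) * Polynomial.X ^ (n - i), ?_, ?_⟩
  · apply Polynomial.monic_X_pow_sub
    refine (Polynomial.degree_sum_le _ _).trans_lt ?_
    rw [Finset.sup_lt_iff (by exact_mod_cast WithBot.bot_lt_coe (n+1))]
    intro i hi
    refine (Polynomial.degree_C_mul_X_pow_le _ _).trans_lt ?_
    exact_mod_cast Nat.lt_succ_of_le (Nat.sub_le n i)
  · have hsum : (∑ i ∈ Finset.range (n + 1), algebraMap A K' (p.coeff i) * x⁻¹ ^ i) = x := by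
      conv_rhs => rw [← hp, Polynomial.aeval_eq_sum_range]
      exact Finset.sum_congr rfl fun i _ => (Algebra.smul_def _ _).symm
    have key : ∀ i ∈ Finset.range (n + 1), algebraMap A K' (p.coeff i) * x ^ (n - i)
        = (algebraMap A K' (p.coeff i) * x⁻¹ ^ i) * x ^ n := by
      intro i hi
      rw [Finset.mem_range, Nat.lt_succ_iff] at hi
      rw [mul_assoc]
      congr 1
      rw [pow_sub₀ x hx hi, ← inv_pow, mul_comm]
    simp only [Polynomial.eval₂_sub, Polynomial.eval₂_X_pow, Polynomial.eval₂_finset_sum,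
      Polynomial.eval₂_mul, Polynomial.eval₂_C]
    rw [Finset.sum_congr rfl key, ← Finset.sum_mul, hsum, ← pow_succ', sub_self]

lemma aux_isIntegral_of_mem_valuationSubrings (A : Subring K') {x : K'}
    (hx : ∀ V : ValuationSubring K', A ≤ V.toSubring → x ∈ V) : IsIntegral A x := by
  by_contra hint
  have hx0 : x ≠ 0 := by rintro rfl; exact hint isIntegral_zero
  set y := x⁻¹ with hy
  set Bs : Subalgebra A K' := Algebra.adjoin A {y} with hBs
  set B : Subring K' := Bs.toSubring with hB
  have hyB : y ∈ B := Algebra.subset_adjoin rfl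
  have hAB : A ≤ B := fun a ha => by
    exact Bs.algebraMap_mem ⟨a, ha⟩
  have hy_nonunit : ¬ IsUnit (⟨y, hyB⟩ : B) := by
    intro hu
    obtain ⟨u, hu⟩ := hu
    have h1 : ((u : B) : K') * (((u⁻¹ : Bˣ) : B) : K') = 1 := by
      exact_mod_cast congrArg (Subtype.val) u.mul_inv
    rw [hu] at h1
    have h2 : x = (((u⁻¹ : Bˣ) : B) : K') := (inv_mul_eq_one₀ hx0).mp h1
    have hxB : x ∈ B := by rw [h2]; exact ((u⁻¹ : Bˣ) : B).2
    have hxBs : x ∈ Algebra.adjoin A ({y} : Set K') := hxB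
    rw [Algebra.adjoin_singleton_eq_range_aeval] at hxBs
    obtain ⟨p, (hp : Polynomial.aeval y p = x)⟩ := hxBs
    exact hint (aux_integral_of_aeval_inv A hx0 p hp)
  obtain ⟨m, hm, hym⟩ := Ideal.exists_le_maximal (Ideal.span {(⟨y, hyB⟩ : B)})
    (by rwa [Ne, Ideal.span_singleton_eq_top])
  have hym' : (⟨y, hyB⟩ : B) ∈ m := hym (Ideal.subset_span rfl)
  obtain ⟨V, hV⟩ := (LocalSubring.ofPrime B m).exists_le_valuationSubring
  have hBV : B ≤ (LocalSubring.ofPrime B m).toSubring := LocalSubring.le_ofPrime B m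
  have hAV : A ≤ V.toSubring := (hAB.trans hBV).trans hV.1
  have hxV : x ∈ V := hx V hAV
  have hyV : y ∈ (LocalSubring.ofPrime B m).toSubring := hBV hyB
  have hyu : IsUnit (Subring.inclusion hV.1 ⟨y, hyV⟩) := by
    refine IsUnit.of_mul_eq_one ⟨x, hxV⟩ (Subtype.ext ?_)
    exact inv_mul_cancel₀ hx0
  have hloc := hV.2
  have hyu' : IsUnit (⟨y, hyV⟩ : (LocalSubring.ofPrime B m).toSubring) :=
    hloc.map_nonunit _ hyu
  have : IsUnit (algebraMap B (LocalSubring.ofPrime B m).toSubring ⟨y, hyB⟩) := hyu'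
  rw [IsLocalization.AtPrime.isUnit_to_map_iff _ m] at this
  exact this hym'

end AuxValuation

instance : IsIntegrallyClosed (bigD k) :=
  isIntegrallyClosed_of_isLocalization (bigD k) (bigN k).primeCompl
    ((bigN k).primeCompl_le_nonZeroDivisors)

/-- The valuation subring `V`, as a `D`-submodule of `K`. -/
def valSubmodule (V : ValuationSubring (bigK k))
    (hV : ∀ d : bigD k, algebraMap (bigD k) (bigK k) d ∈ V) : Submodule (bigD k) (bigK k) where
  carrier := (V : Set (bigK k))
  add_mem' := fun h1 h2 => add_mem h1 h2
  zero_mem' := zero_mem _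
  smul_mem' := fun d v hv => by
    rw [Algebra.smul_def]; exact mul_mem (hV d) hv

lemma aux_span_one_mul_val (V : ValuationSubring (bigK k))
    (hV : ∀ d : bigD k, algebraMap (bigD k) (bigK k) d ∈ V) :
    Submodule.span (bigD k)
        (((1 : Submodule (bigD k) (bigK k)) : Set (bigK k)) * (V : Set (bigK k)))
      = valSubmodule k V hV := by
  apply le_antisymm
  · rw [Submodule.span_le]
    rintro w ⟨a, ha, b, hb, rfl⟩
    obtain ⟨d, rfl⟩ := Submodule.mem_one.mp ha
    have : algebraMap (bigD k) (bigK k) d * b ∈ V := mul_mem (hV d) hb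
    exact this
  · intro v hv
    exact Submodule.subset_span ⟨1, Submodule.mem_one.mpr ⟨1, map_one _⟩, v, hv, one_mul v⟩

lemma aux_bOp_one : bOp k (1 : Submodule (bigD k) (bigK k)) = 1 := by
  apply le_antisymm
  · intro x hx
    have hmem : ∀ (V : ValuationSubring (bigK k))
        (hV : ∀ d : bigD k, algebraMap (bigD k) (bigK k) d ∈ V), x ∈ V := by
      intro V hV
      have h := Submodule.mem_sInf.mp hx
        (Submodule.span (bigD k)
          (((1 : Submodule (bigD k) (bigK k)) : Set (bigK k)) * (V : Set (bigK k))))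
        ⟨V, hV, rfl⟩
      rw [aux_span_one_mul_val k V hV] at h
      exact h
    set A : Subring (bigK k) := (algebraMap (bigD k) (bigK k)).range with hA
    have hint : IsIntegral A x := aux_isIntegral_of_mem_valuationSubrings A
      (fun V hle => hmem V (fun d => hle ⟨d, rfl⟩))
    -- transfer integrality from the range subring to `D`
    have hinj : Function.Injective (algebraMap (bigD k) (bigK k)) :=
      IsFractionRing.injective _ _
    let e : bigD k ≃+* A := RingEquiv.ofBijective (algebraMap (bigD k) (bigK k)).rangeRestrict
      ⟨fun a b hab => hinj (congrArg Subtype.val hab), (algebraMap (bigD k) (bigK k)).rangeRestrict_surjective⟩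
    have h3 : ∀ d : bigD k, ((e d : A) : bigK k) = algebraMap (bigD k) (bigK k) d :=
      fun d => rfl
    have hcomp : (algebraMap (bigD k) (bigK k)).comp (e.symm : A →+* bigD k) = A.subtype := by
      ext a
      calc algebraMap (bigD k) (bigK k) ((e.symm : A →+* bigD k) a)
          = ((e (e.symm a) : A) : bigK k) := (h3 _).symm
        _ = (a : bigK k) := by rw [e.apply_symm_apply]
    have hintD : IsIntegral (bigD k) x := by
      obtain ⟨q, hq, he⟩ := hint
      refine ⟨q.map (e.symm : A →+* bigD k), hq.map _, ?_⟩
      rw [Polynomial.eval₂_map, hcomp]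
      exact he
    obtain ⟨y, hy⟩ := IsIntegrallyClosed.isIntegral_iff.mp hintD
    exact Submodule.mem_one.mpr ⟨y, hy⟩
  · apply le_sInf
    rintro J ⟨V, hV, rfl⟩
    rw [Submodule.one_le]
    exact Submodule.subset_span ⟨1, Submodule.mem_one.mpr ⟨1, map_one _⟩, 1, V.one_mem, one_mul 1⟩

lemma aux_mem_smul {z : bigK k} (hz : z ≠ 0) {S : Submodule (bigD k) (bigK k)} {x : bigK k} :
    x ∈ z • S ↔ z⁻¹ * x ∈ S := by
  have : (z • S : Submodule (bigD k) (bigK k)) = S.map (DistribMulAction.toLinearMap (bigD k) (bigK k) z) := rfl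
  rw [this, Submodule.mem_map]
  constructor
  · rintro ⟨y, hy, rfl⟩
    show z⁻¹ * (z • y) ∈ S
    simpa [smul_eq_mul, inv_mul_cancel_left₀ hz] using hy
  · intro h
    exact ⟨z⁻¹ * x, h, by show z • (z⁻¹ * x) = x; simp [smul_eq_mul, mul_inv_cancel_left₀ hz]⟩

lemma aux_smul_mem_Sset {z : bigK k} (hz : z ≠ 0) {J : Submodule (bigD k) (bigK k)}
    (hJ : J ∈ Sset k) : z • J ∈ Sset k := by
  obtain ⟨x, hx, F, hF, hFG, rfl⟩ | ⟨y, hy, rfl⟩ := hJ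
  · exact Or.inl ⟨z * x, mul_ne_zero hz hx, F, hF, hFG, by
      rw [← Submodule.span_singleton_mul, ← mul_assoc, Submodule.span_mul_span,
        Set.singleton_mul_singleton]⟩
  · exact Or.inr ⟨z * y, mul_ne_zero hz hy, by
      rw [← Submodule.span_singleton_mul, ← mul_assoc, Submodule.span_mul_span,
        Set.singleton_mul_singleton]⟩

lemma aux_starS_smul {z : bigK k} (hz : z ≠ 0) (E : Submodule (bigD k) (bigK k)) :
    starS k (z • E) = z • starS k E := by
  ext x
  rw [aux_mem_smul k hz]
  simp only [starS, Submodule.mem_sInf, Set.mem_setOf_eq]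
  constructor
  · rintro h J ⟨hJS, hJE⟩
    have hx : x ∈ z • J := by
      refine h (z • J) ⟨aux_smul_mem_Sset k hz hJS, ?_⟩
      intro w hw
      rw [aux_mem_smul k hz] at hw ⊢
      exact hJE hw
    exact (aux_mem_smul k hz).mp hx
  · rintro h J ⟨hJS, hJE⟩
    have h2 : z⁻¹ * x ∈ z⁻¹ • J := by
      refine h (z⁻¹ • J) ⟨aux_smul_mem_Sset k (inv_ne_zero hz) hJS, ?_⟩
      intro w hw
      rw [aux_mem_smul k (inv_ne_zero hz), inv_inv]
      exact hJE ((aux_mem_smul k hz).mpr (by rwa [inv_mul_cancel_left₀ hz]))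
    rw [aux_mem_smul k (inv_ne_zero hz), inv_inv, ← mul_assoc, mul_inv_cancel₀ hz, one_mul] at h2
    exact h2

lemma aux_one_ne_zero : (1 : FractionalIdeal (nonZeroDivisors (bigD k)) (bigK k)) ≠ 0 := by
  intro h
  have h1 : (1 : bigK k) ∈ ((1 : FractionalIdeal (nonZeroDivisors (bigD k)) (bigK k)) :
      Submodule (bigD k) (bigK k)) := by
    rw [FractionalIdeal.coe_one]
    exact Submodule.mem_one.mpr ⟨1, map_one _⟩
  rw [h] at h1
  simp only [FractionalIdeal.coe_zero, Submodule.mem_bot] at h1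
  exact one_ne_zero h1

lemma aux_span_singleton_mem_Sset {z : bigK k} (hz : z ≠ 0) :
    Submodule.span (bigD k) {z} ∈ Sset k := by
  refine Or.inl ⟨z, hz, 1, aux_one_ne_zero k, ?_, ?_⟩
  · rw [FractionalIdeal.coe_one]
    exact ⟨{1}, by rw [Finset.coe_singleton, ← Submodule.one_eq_span]⟩
  · rw [FractionalIdeal.coe_one, aux_bOp_one, mul_one]
/-- The map `E ↦ E^⋆ = ⋂ {J ∈ 𝒮 : E ⊆ J}` is a star operation on `D`. -/
theorem starS_is_star_operation :
    -- `(zD)^⋆ = zD`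
    (∀ z : bigK k, z ≠ 0 →
      starS k ((spanSingleton (nonZeroDivisors (bigD k)) z :
          FractionalIdeal (nonZeroDivisors (bigD k)) (bigK k)) : Submodule (bigD k) (bigK k)) =
        ((spanSingleton (nonZeroDivisors (bigD k)) z :
          FractionalIdeal (nonZeroDivisors (bigD k)) (bigK k)) :
            Submodule (bigD k) (bigK k))) ∧
    -- `(zE)^⋆ = z(E^⋆)`
    (∀ z : bigK k, z ≠ 0 →
      ∀ E : FractionalIdeal (nonZeroDivisors (bigD k)) (bigK k), E ≠ 0 →
        starS k ((spanSingleton (nonZeroDivisors (bigD k)) z * E :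
            FractionalIdeal (nonZeroDivisors (bigD k)) (bigK k)) :
              Submodule (bigD k) (bigK k)) =
          Submodule.span (bigD k) {z} * starS k (E : Submodule (bigD k) (bigK k))) ∧
    -- `E ⊆ F → E^⋆ ⊆ F^⋆`
    (∀ E F : FractionalIdeal (nonZeroDivisors (bigD k)) (bigK k), E ≠ 0 → F ≠ 0 → E ≤ F →
      starS k (E : Submodule (bigD k) (bigK k)) ≤ starS k (F : Submodule (bigD k) (bigK k))) ∧
    -- `E ⊆ E^⋆` and `(E^⋆)^⋆ = E^⋆`
    (∀ E : FractionalIdeal (nonZeroDivisors (bigD k)) (bigK k), E ≠ 0 →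
      (E : Submodule (bigD k) (bigK k)) ≤ starS k (E : Submodule (bigD k) (bigK k)) ∧
        starS k (starS k (E : Submodule (bigD k) (bigK k))) =
          starS k (E : Submodule (bigD k) (bigK k))) := by
  refine ⟨?_, ?_, ?_, ?_⟩
  · -- (zD)^⋆ = zD
    intro z hz
    rw [FractionalIdeal.coe_spanSingleton]
    apply le_antisymm
    · exact sInf_le ⟨aux_span_singleton_mem_Sset k hz, le_rfl⟩
    · exact le_sInf fun J hJ => hJ.2
  · -- (zE)^⋆ = z E^⋆
    intro z hz E _
    rw [FractionalIdeal.coe_mul, FractionalIdeal.coe_spanSingleton,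
      Submodule.span_singleton_mul, aux_starS_smul k hz, Submodule.span_singleton_mul]
  · -- monotone
    intro E F _ _ hEF
    apply sInf_le_sInf
    intro J hJ
    exact ⟨hJ.1, le_trans (FractionalIdeal.coe_le_coe.mpr hEF) hJ.2⟩
  · -- E ≤ E^⋆ and idempotence
    intro E _
    refine ⟨le_sInf fun J hJ => hJ.2, ?_⟩
    apply le_antisymm
    · apply sInf_le_sInf
      intro J hJ
      exact ⟨hJ.1, sInf_le hJ⟩
    · apply sInf_le_sInf
      intro J hJ
      exact ⟨hJ.1, le_trans (le_sInf fun J' hJ' => hJ'.2) hJ.2⟩
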